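/- Let T be a real random variable with P(T > 0) = 1 and P(T < ∞) = 1, and suppose that for every positive integer N, if T¹, …, Tᴺ are independent copies of T then N·min{T¹, …, Tᴺ} has the same law as T. Then there exists λ ∈ (0,∞) such that T is exponentially distributed with rate λ, i.e. P(T > t) = exp(−λ t) for all t ≥ 0. -/

import Mathlib

open MeasureTheory ProbabilityTheory

/-- `T` is exponentially distributed with rate `r` under `P`:
`P(T > t) = exp (-r t)` for all `t ≥ 0`. -/
def ExpDist {Ω : Type*} [MeasurableSpace Ω] (P : Measure Ω) (T : Ω → ℝ) (r : ℝ) : Prop :=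
  ∀ t : ℝ, 0 ≤ t → P {ω | t < T ω} = ENNReal.ofReal (Real.exp (-r * t))

/-- Converse assertion: let `T` be a real random variable with `P(T > 0) = 1`
(it is real-valued, hence a.s. finite).  If for every `N ≥ 1`, `N` times the minimum of
`N` independent copies of `T` (canonically realized on the product space
`Measure.pi (fun _ : Fin N => Measure.map T P)`) has the same law as `T`, then `T` is
exponentially distributed with some rate `lam ∈ (0,∞)`. -/
theorem exponential_of_min_property {Ω : Type*} [MeasurableSpace Ω] (P : Measure Ω)
    [IsProbabilityMeasure P] (T : Ω → ℝ) (hT : Measurable T)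
    (hpos : P {ω | 0 < T ω} = 1)
    (hmin : ∀ N : ℕ, 0 < N →
      Measure.map (fun x : Fin N → ℝ => (N : ℝ) * ⨅ k, x k)
          (Measure.pi fun _ : Fin N => Measure.map T P)
        = Measure.map T P) :
    ∃ lam : ℝ, 0 < lam ∧ ExpDist P T lam := by
  set μ := Measure.map T P with hμ
  have hμprob : IsProbabilityMeasure μ := Measure.isProbabilityMeasure_map hT.aemeasurable
  have hfin : ∀ s : Set ℝ, μ s ≠ ⊤ := fun s => (measure_lt_top μ s).ne
  have hμIoi : ∀ t : ℝ, μ (Set.Ioi t) = P {ω | t < T ω} := by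
    intro t
    rw [hμ, Measure.map_apply hT measurableSet_Ioi]
    rfl
  have key : ∀ N : ℕ, 0 < N → ∀ t : ℝ,
      μ (Set.Ioi t) = μ (Set.Ioi (t / N)) ^ N := by
    intro N hN t
    haveI : NeZero N := ⟨hN.ne'⟩
    have hf : Measurable (fun x : Fin N → ℝ => (N : ℝ) * ⨅ k, x k) :=
      (Measurable.iInf fun k => measurable_pi_apply k).const_mul _
    have hpre : (fun x : Fin N → ℝ => (N : ℝ) * ⨅ k, x k) ⁻¹' Set.Ioi t
        = Set.univ.pi (fun _ : Fin N => Set.Ioi (t / N)) := by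
      ext x
      have hNpos : (0:ℝ) < N := by exact_mod_cast hN
      simp only [Set.mem_preimage, Set.mem_Ioi, Set.mem_pi, Set.mem_univ, forall_true_left]
      rw [mul_comm, ← div_lt_iff₀ hNpos]
      constructor
      · intro h k
        exact h.trans_le (ciInf_le (Set.Finite.bddBelow (Set.finite_range x)) k)
      · intro h
        obtain ⟨k, hk⟩ := exists_eq_ciInf_of_finite (f := x)
        rw [← hk]
        exact h k
    calc μ (Set.Ioi t) = Measure.map (fun x : Fin N → ℝ => (N : ℝ) * ⨅ k, x k)
          (Measure.pi fun _ : Fin N => μ) (Set.Ioi t) := by rw [hmin N hN]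
      _ = (Measure.pi fun _ : Fin N => μ) (Set.univ.pi fun _ => Set.Ioi (t / N)) := by
          rw [Measure.map_apply hf measurableSet_Ioi, hpre]
      _ = μ (Set.Ioi (t / N)) ^ N := by
          rw [Measure.pi_pi]; simp
  -- real-valued survival function
  set g : ℝ → ℝ := fun t => (μ (Set.Ioi t)).toReal with hg
  have g0 : g 0 = 1 := by
    simp only [hg, hμIoi 0]
    rw [show {ω | (0:ℝ) < T ω} = {ω | 0 < T ω} from rfl, hpos]
    simp
  have gnonneg : ∀ t, 0 ≤ g t := fun t => ENNReal.toReal_nonneg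
  have gle1 : ∀ t, g t ≤ 1 := by
    intro t
    rw [hg]
    exact ENNReal.toReal_le_of_le_ofReal zero_le_one (by simpa using prob_le_one (μ := μ))
  have ganti : Antitone g := by
    intro s t hst
    exact ENNReal.toReal_mono (hfin _) (measure_mono (Set.Ioi_subset_Ioi hst))
  have gkey : ∀ N : ℕ, 0 < N → ∀ t : ℝ, g t = g (t / N) ^ N := by
    intro N hN t
    rw [hg]
    simp only
    rw [key N hN t, ENNReal.toReal_pow]
  set c : ℝ := g 1 with hc
  have cpos : 0 < c := by
    rcases (gnonneg 1).lt_or_eq with h | h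
    · exact h
    · exfalso
      have hzero : ∀ N : ℕ, 0 < N → μ (Set.Ioi (1 / (N:ℝ))) = 0 := by
        intro N hN
        have h1 : g (1 / N) ^ N = 0 := by rw [← gkey N hN 1]; exact h.symm
        have h2 : g (1 / N) = 0 := by
          have := pow_eq_zero_iff hN.ne' |>.mp h1
          exact this
        rw [hg] at h2
        simpa [ENNReal.toReal_eq_zero_iff, hfin] using h2
      have hzero' : ∀ n : ℕ, μ (Set.Ioi (1 / ((n:ℝ)+1))) = 0 := by
        intro n
        have := hzero (n+1) n.succ_pos
        push_cast at this
        exact this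
      have hsub : Set.Ioi (0:ℝ) ⊆ ⋃ n : ℕ, Set.Ioi (1 / ((n:ℝ)+1)) := by
        intro x hx
        obtain ⟨n, hn⟩ := exists_nat_one_div_lt (Set.mem_Ioi.mp hx)
        exact Set.mem_iUnion.2 ⟨n, hn⟩
      have : μ (Set.Ioi (0:ℝ)) = 0 := by
        refine le_antisymm ?_ zero_le
        calc μ (Set.Ioi (0:ℝ)) ≤ ∑' n : ℕ, μ (Set.Ioi (1 / ((n:ℝ)+1))) :=
              (measure_mono hsub).trans (measure_iUnion_le _)
          _ = 0 := by
              simp only [one_div] at hzero'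
              simp [hzero']
      rw [hμIoi 0, hpos] at this
      simp at this
  have clt1 : c < 1 := by
    rcases (gle1 1).lt_or_eq with h | h
    · exact h
    · exfalso
      have hone : ∀ m : ℕ, 0 < m → μ (Set.Ioi ((m:ℝ))) = 1 := by
        intro m hm
        have h1 : g (m:ℝ) = 1 := by
          rw [gkey m hm (m:ℝ), div_self (by exact_mod_cast hm.ne' : ((m:ℝ)) ≠ 0)]
          rw [show g 1 = 1 from h, one_pow]
        rw [hg] at h1
        have := (ENNReal.toReal_eq_one_iff _).mp h1
        exact this
      have hcompl : ∀ m : ℕ, 0 < m → μ (Set.Iic ((m:ℝ))) = 0 := by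
        intro m hm
        have := measure_compl (μ := μ) (measurableSet_Ioi (a := (m:ℝ))) (hfin _)
        rw [hone m hm] at this
        simpa [Set.compl_Ioi] using this
      have hcompl' : ∀ n : ℕ, μ (Set.Iic ((n:ℝ)+1)) = 0 := by
        intro n
        have := hcompl (n+1) n.succ_pos
        push_cast at this
        exact this
      have huniv : (Set.univ : Set ℝ) ⊆ ⋃ n : ℕ, Set.Iic ((n:ℝ)+1) := by
        intro x _
        obtain ⟨n, hn⟩ := exists_nat_gt x
        exact Set.mem_iUnion.2 ⟨n, by simp only [Set.mem_Iic]; linarith⟩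
      have : μ Set.univ = 0 := by
        refine le_antisymm ?_ zero_le
        calc μ Set.univ ≤ ∑' n : ℕ, μ (Set.Iic ((n:ℝ)+1)) :=
              (measure_mono huniv).trans (measure_iUnion_le _)
          _ = 0 := by simp [hcompl']
      simp [measure_univ] at this
  set lam : ℝ := -Real.log c with hlam
  have lampos : 0 < lam := by
    rw [hlam]
    linarith [Real.log_neg cpos clt1]
  have hcexp : c = Real.exp (-lam) := by
    rw [hlam, neg_neg, Real.exp_log cpos]
  -- value at m : ℕ
  have gnat : ∀ m : ℕ, g (m:ℝ) = c ^ m := by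
    intro m
    rcases Nat.eq_zero_or_pos m with rfl | hm
    · simpa using g0
    · rw [gkey m hm (m:ℝ), div_self (by exact_mod_cast hm.ne' : ((m:ℝ)) ≠ 0), hc]
  have grat : ∀ m N : ℕ, 0 < N → g ((m:ℝ) / N) = Real.exp (-lam * ((m:ℝ) / N)) := by
    intro m N hN
    have hNR : ((N:ℝ)) ≠ 0 := by exact_mod_cast hN.ne'
    have h1 : g ((m:ℝ) / N) ^ N = Real.exp (-lam * ((m:ℝ) / N)) ^ N := by
      rw [← gkey N hN (m:ℝ), gnat m, ← Real.exp_nat_mul, hcexp, ← Real.exp_nat_mul]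
      congr 1
      field_simp
    exact (pow_left_strictMonoOn₀ hN.ne').injOn (gnonneg _) (Real.exp_nonneg _) h1
  have gq : ∀ q : ℚ, 0 ≤ q → g (q:ℝ) = Real.exp (-lam * (q:ℝ)) := by
    intro q hq
    have hnum : ((q.num.toNat : ℕ) : ℝ) = (q.num : ℝ) := by
      exact_mod_cast congrArg (Int.cast : ℤ → ℝ) (Int.toNat_of_nonneg (Rat.num_nonneg.2 hq))
    have hcast : (q:ℝ) = ((q.num.toNat : ℕ):ℝ) / ((q.den : ℕ):ℝ) := by
      rw [hnum, Rat.cast_def]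
    rw [hcast, grat _ _ q.pos]
  -- squeeze
  have gexp : ∀ t : ℝ, 0 ≤ t → g t = Real.exp (-lam * t) := by
    intro t ht
    have hcont : Filter.Tendsto (fun s => Real.exp (-lam * s)) (nhds t)
        (nhds (Real.exp (-lam * t))) :=
      (Real.continuous_exp.comp (continuous_const.mul continuous_id)).continuousAt
    refine le_antisymm ?_ ?_
    · by_contra hlt
      push_neg at hlt
      rcases ht.lt_or_eq with htpos | rfl
      swap
      · simp [g0] at hlt
      obtain ⟨δ, hδ, hδ'⟩ := Metric.eventually_nhds_iff.mp (hcont.eventually_lt_const hlt)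
      have hmax : max (t - δ) 0 < t := max_lt (by linarith) htpos
      obtain ⟨q, hq1, hq2⟩ := exists_rat_btwn hmax
      have hq0 : (0:ℝ) ≤ q := le_of_lt (lt_of_le_of_lt (le_max_right _ _) hq1)
      have hdist : dist (q:ℝ) t < δ := by
        rw [Real.dist_eq, abs_of_nonpos (by linarith)]
        have := lt_of_le_of_lt (le_max_left _ _) hq1
        linarith
      have := hδ' hdist
      rw [← gq q (by exact_mod_cast hq0)] at this
      exact absurd (ganti hq2.le) (not_le.mpr this)
    · by_contra hlt
      push_neg at hlt
      obtain ⟨δ, hδ, hδ'⟩ := Metric.eventually_nhds_iff.mp (hcont.eventually_const_lt hlt)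
      obtain ⟨q, hq1, hq2⟩ := exists_rat_btwn (show t < t + δ by linarith)
      have hq0 : (0:ℝ) ≤ q := le_trans ht hq1.le
      have hdist : dist (q:ℝ) t < δ := by
        rw [Real.dist_eq, abs_of_nonneg (by linarith)]
        linarith
      have := hδ' hdist
      rw [← gq q (by exact_mod_cast hq0)] at this
      exact absurd this (not_lt.mpr (ganti hq1.le))
  refine ⟨lam, lampos, fun t ht => ?_⟩
  rw [← hμIoi t, ← ENNReal.ofReal_toReal (hfin (Set.Ioi t))]
  congr 1
  exact gexp t ht
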